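/- Let n ≥ 2 and let Y = Σ_{1≤i<j≤n} a_{ij}E_{ij} be a strictly upper triangular n×n complex matrix (E_{ij} the elementary matrix with 1 in position (i,j)) such that a_{i,i+1} ≠ 0 for all 1 ≤ i ≤ n−1. Then there exist g ∈ G_0 = SL_n(A) and h in the Iwahori subgroup 𝓑 such that g·κ = Ȳ·h in SL_n(F). -/

import Mathlib

/-! Statement 0: Lemma 4.1 (the main lemma) of "Cotangent bundle to the Flag variety-I".
Let `F = ℂ((t))`, `A = ℂ[[t]]`, `G₀ = SL_n(A)`, `𝓑` the Iwahori subgroup,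
`κ = diag(t, …, t, t^{-(n-1)})`.  For a strictly upper triangular complex matrix `Y`
with nonzero superdiagonal entries, there exist `g ∈ G₀` and `h ∈ 𝓑` with
`g·κ = Ȳ·h`, where `Ȳ = Id + t⁻¹Y + t⁻²Y² + ⋯ + t^{-(n-1)}Y^{n-1}`. -/

noncomputable section

/-- The field of formal Laurent series over `ℂ`. -/
abbrev FF : Type := LaurentSeries ℂ

/-- The uniformizer `t` of `ℂ((t))`. -/
def tF : FF := HahnSeries.single (1 : ℤ) (1 : ℂ)

/-- An element of `F = ℂ((t))` is integral if it lies in `A = ℂ[[t]]`,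
i.e. all coefficients of negative index vanish. -/
def Integral (x : FF) : Prop := ∀ m : ℤ, m < 0 → x.coeff m = 0

/-- Membership in `G₀ = SL_n(ℂ[[t]])`: all entries integral and determinant `1`. -/
def MemG0 {n : ℕ} (g : Matrix (Fin n) (Fin n) FF) : Prop :=
  g.det = 1 ∧ ∀ i j : Fin n, Integral (g i j)

/-- Membership in the Iwahori subgroup `𝓑`: all entries integral, determinant `1`,
and the matrix of constant terms `h(0)` is upper triangular. -/
def MemIwahori {n : ℕ} (h : Matrix (Fin n) (Fin n) FF) : Prop :=
  h.det = 1 ∧ (∀ i j : Fin n, Integral (h i j)) ∧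
    ∀ i j : Fin n, (j : ℕ) < (i : ℕ) → (h i j).coeff 0 = 0

/-- The element `κ = diag(t, t, …, t, t^{-(n-1)})` of `SL_n(F)`. -/
def kappaMat (n : ℕ) : Matrix (Fin n) (Fin n) FF :=
  Matrix.diagonal fun i => if (i : ℕ) = n - 1 then tF ^ (-((n : ℤ) - 1)) else tF

/-- A complex matrix viewed as a matrix over `F = ℂ((t))`. -/
def liftC {n : ℕ} (Y : Matrix (Fin n) (Fin n) ℂ) : Matrix (Fin n) (Fin n) FF :=
  Y.map (algebraMap ℂ FF)

/-- For a nilpotent complex matrix `Y`, the element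
`Ȳ = Id + t⁻¹Y + t⁻²Y² + ⋯ + t^{-(n-1)}Y^{n-1}` of `SL_n(F)`. -/
def Ybar {n : ℕ} (Y : Matrix (Fin n) (Fin n) ℂ) : Matrix (Fin n) (Fin n) FF :=
  ∑ k ∈ Finset.range n, tF ^ (-(k : ℤ)) • liftC (Y ^ k)

namespace S0
open PowerSeries Finset

/-- The inclusion `ℂ[[t]] → ℂ((t))`. -/
def phs : PowerSeries ℂ →+* FF := HahnSeries.ofPowerSeries ℤ ℂ

lemma tF_eq : tF = phs PowerSeries.X := (HahnSeries.ofPowerSeries_X).symm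
lemma tF_ne : tF ≠ 0 := HahnSeries.single_ne_zero one_ne_zero
lemma algC (a : ℂ) : algebraMap ℂ FF a = phs (PowerSeries.C a) := by
  rw [HahnSeries.algebraMap_apply', PowerSeries.algebraMap_apply]; simp [phs]
lemma int_phs (f : PowerSeries ℂ) : Integral (phs f) := by
  intro m hm
  rw [phs, HahnSeries.ofPowerSeries_apply]
  apply HahnSeries.embDomain_notin_range
  rintro ⟨k, hk⟩
  have hk : ((k:ℕ):ℤ) = m := hk
  omega
lemma coeff0_phs (f : PowerSeries ℂ) :
    (phs f).coeff (0:ℤ) = PowerSeries.constantCoeff f := by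
  have := HahnSeries.ofPowerSeries_apply_coeff (Γ := ℤ) (R := ℂ) f 0
  simpa [phs] using this

variable {m : ℕ} (Y : Matrix (Fin (m+2)) (Fin (m+2)) ℂ)

lemma pow_entry_eq_zero (hupper : ∀ i j : Fin (m+2), (j : ℕ) ≤ (i : ℕ) → Y i j = 0)
    (k : ℕ) (i j : Fin (m+2)) (h : (j:ℕ) < (i:ℕ) + k) : (Y^k) i j = 0 := by
  induction k generalizing i with
  | zero => rw [pow_zero]; exact Matrix.one_apply_ne (by intro e; subst e; omega)
  | succ k ih =>
    rw [pow_succ', Matrix.mul_apply]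
    apply Finset.sum_eq_zero
    intro l _
    by_cases hl : (l:ℕ) ≤ (i:ℕ)
    · rw [hupper i l hl, zero_mul]
    · rw [ih l (by omega), mul_zero]

lemma pow_Y_top (hupper : ∀ i j : Fin (m+2), (j : ℕ) ≤ (i : ℕ) → Y i j = 0) :
    Y ^ (m+2) = 0 := by
  ext i j
  rw [pow_entry_eq_zero Y hupper (m+2) i j (by omega)]
  rfl

lemma pow_entry_ne_zero
    (hupper : ∀ i j : Fin (m+2), (j : ℕ) ≤ (i : ℕ) → Y i j = 0)
    (hsuper : ∀ i j : Fin (m+2), (j : ℕ) = (i : ℕ) + 1 → Y i j ≠ 0)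
    (k : ℕ) (i j : Fin (m+2)) (h : (j:ℕ) = (i:ℕ) + k) : (Y^k) i j ≠ 0 := by
  induction k generalizing i with
  | zero =>
    have : i = j := Fin.ext (by omega)
    subst this
    simp [pow_zero, Matrix.one_apply]
  | succ k ih =>
    have hi1 : (i:ℕ) + 1 < m + 2 := by have := j.isLt; omega
    set i1 : Fin (m+2) := ⟨(i:ℕ)+1, hi1⟩ with hi1d
    rw [pow_succ', Matrix.mul_apply, Finset.sum_eq_single i1]
    · exact mul_ne_zero (hsuper i i1 rfl) (ih i1 (by simp [hi1d]; omega))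
    · intro l _ hl
      by_cases hle : (l:ℕ) ≤ (i:ℕ)
      · rw [hupper i l hle, zero_mul]
      · have : (i:ℕ) + 2 ≤ (l:ℕ) := by
          rcases Nat.lt_or_ge ((i:ℕ)+1) (l:ℕ) with h2 | h2
          · omega
          · exact absurd (show l = i1 from Fin.ext (by simp only [hi1d, Fin.val_mk]; omega)) hl
        rw [pow_entry_eq_zero Y hupper k l j (by omega), mul_zero]
    · intro hmem; exact absurd (Finset.mem_univ i1) hmem

/-- the column vector `u = t^{n-1}Ȳeₙ`, at power-series level -/
def pv (i : Fin (m+2)) : PowerSeries ℂ :=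
  ∑ k ∈ Finset.range (m+2), X ^ (m+1-k) * C ((Y^k) i (Fin.last (m+1)))

lemma constantCoeff_pv (i : Fin (m+2)) :
    constantCoeff (pv Y i) = (Y^(m+1)) i (Fin.last (m+1)) := by
  rw [pv, map_sum, Finset.sum_eq_single (m+1)]
  · simp
  · intro k hk hne
    have : m + 1 - k ≠ 0 := by simp at hk; omega
    simp [zero_pow this]
  · intro h; simp at h

lemma key_p (hupper : ∀ i j : Fin (m+2), (j : ℕ) ≤ (i : ℕ) → Y i j = 0) (i : Fin (m+2)) :
    X * pv Y i - ∑ l, C (Y i l) * pv Y l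
      = X^(m+2) * C ((1 : Matrix (Fin (m+2)) (Fin (m+2)) ℂ) i (Fin.last (m+1))) := by
  have h1 : X * pv Y i
      = ∑ k ∈ Finset.range (m+2), X^(m+2-k) * C ((Y^k) i (Fin.last (m+1))) := by
    rw [pv, Finset.mul_sum]
    refine Finset.sum_congr rfl fun k hk => ?_
    rw [← mul_assoc, ← pow_succ']
    congr 2
    simp at hk; omega
  have h2 : (∑ l, C (Y i l) * pv Y l)
      = ∑ k ∈ Finset.range (m+2), X^(m+1-k) * C ((Y^(k+1)) i (Fin.last (m+1))) := by
    simp only [pv, Finset.mul_sum]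
    rw [Finset.sum_comm]
    refine Finset.sum_congr rfl fun k _ => ?_
    have : ∀ l : Fin (m+2), C (Y i l) * (X^(m+1-k) * C ((Y^k) l (Fin.last (m+1))))
        = X^(m+1-k) * C (Y i l * (Y^k) l (Fin.last (m+1))) := by
      intro l; rw [map_mul]; ring
    rw [Finset.sum_congr rfl fun l _ => this l, ← Finset.mul_sum, ← map_sum]
    congr 2
    rw [pow_succ', Matrix.mul_apply]
  rw [h1, h2, ← Finset.sum_sub_distrib]
  have := Finset.sum_range_sub' (fun k => X^(m+2-k) * C ((Y^k) i (Fin.last (m+1)))) (m+2)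
  simp only [Nat.succ_sub_succ] at this
  rw [this, Nat.sub_self, pow_zero, pow_Y_top Y hupper]
  simp

/-- The unit `λ = (-1)^{n-1}u₁⁻¹`. -/
def lamP : PowerSeries ℂ := (-1)^(m+1) * (pv Y 0)⁻¹

/-- The matrix `g`, at power-series level: columns `λe₂, e₃, …, eₙ, u`. -/
def Gp : Matrix (Fin (m+2)) (Fin (m+2)) (PowerSeries ℂ) :=
  Matrix.of fun i j =>
    if j = Fin.last (m+1) then pv Y i
    else if (i:ℕ) = (j:ℕ)+1 then (if j = 0 then lamP Y else 1) else 0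

def jsucc (j : Fin (m+2)) : Fin (m+2) := ⟨min ((j:ℕ)+1) (m+1), by omega⟩

lemma jsucc_val (j : Fin (m+2)) (h : j ≠ Fin.last (m+1)) : ((jsucc j : Fin (m+2)) : ℕ) = (j:ℕ)+1 := by
  have : (j:ℕ) < m+1 := by
    have h2 := j.isLt
    rcases Nat.lt_or_ge (j:ℕ) (m+1) with h1 | h1
    · exact h1
    · exact absurd (Fin.ext (by rw [Fin.val_last]; omega) : j = Fin.last (m+1)) h
  simp [jsucc]; omega

/-- The matrix `h`, at power-series level. -/
def Hp : Matrix (Fin (m+2)) (Fin (m+2)) (PowerSeries ℂ) :=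
  Matrix.of fun i j =>
    if j = Fin.last (m+1) then (if i = Fin.last (m+1) then 1 else 0)
    else (if j = 0 then lamP Y else 1) *
      (X * (if (i:ℕ) = (j:ℕ)+1 then 1 else 0) - C (Y i (jsucc j)))

/-- `Ȳ · (t·1 − Y) = t·1`. -/
lemma Ybar_mul_N (hupper : ∀ i j : Fin (m+2), (j : ℕ) ≤ (i : ℕ) → Y i j = 0) :
    Ybar Y * (tF • 1 - liftC Y) = tF • 1 := by
  rw [Ybar, Finset.sum_mul]
  have hterm : ∀ k ∈ Finset.range (m+2),
      (tF ^ (-(k:ℤ)) • liftC (Y^k)) * (tF • 1 - liftC Y)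
        = (fun k : ℕ => tF ^ ((1:ℤ)-(k:ℤ)) • liftC (Y^k)) k
          - (fun k : ℕ => tF ^ ((1:ℤ)-(k:ℤ)) • liftC (Y^k)) (k+1) := by
    intro k _
    rw [mul_sub]
    congr 1
    · rw [Matrix.smul_mul (tF ^ (-(k:ℤ))) (liftC (Y^k))
        (tF • (1 : Matrix (Fin (m+2)) (Fin (m+2)) FF)),
        Matrix.mul_smul (liftC (Y^k)) tF (1 : Matrix (Fin (m+2)) (Fin (m+2)) FF),
        Matrix.mul_one, smul_smul (tF ^ (-(k:ℤ))) tF (liftC (Y^k))]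
      congr 1
      rw [mul_comm, ← zpow_one_add₀ tF_ne]
      congr 1
    · rw [Matrix.smul_mul (tF ^ (-(k:ℤ))) (liftC (Y^k)) (liftC Y)]
      have : liftC (Y^k) * liftC Y = liftC (Y^(k+1)) := by
        rw [pow_succ, liftC, liftC, liftC, Matrix.map_mul]
      rw [this]
      congr 1
      push_cast
      ring
  rw [Finset.sum_congr rfl hterm, Finset.sum_range_sub']
  have l1 : liftC (Y^0) = (1 : Matrix (Fin (m+2)) (Fin (m+2)) FF) := by
    rw [pow_zero, liftC, Matrix.map_one _ (map_zero _) (map_one _)]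
  rw [pow_Y_top Y hupper, l1]
  have l0 : liftC (0 : Matrix (Fin (m+2)) (Fin (m+2)) ℂ) = 0 := by
    rw [liftC]; ext i j; simp
  rw [l0]
  refine Matrix.ext fun i j => ?_
  rw [Matrix.sub_apply, Matrix.smul_apply, Matrix.smul_apply, Matrix.smul_apply]
  norm_num

/-- The key identity `(t·1 − Y)·g·κ = t·h`. -/
lemma key_identity (hupper : ∀ i j : Fin (m+2), (j : ℕ) ≤ (i : ℕ) → Y i j = 0) :
    (tF • 1 - liftC Y) * ((Gp Y).map phs) * kappaMat (m+2) = tF • ((Hp Y).map phs) := by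
  have hNG : (tF • 1 - liftC Y) * ((Gp Y).map phs)
      = tF • ((Gp Y).map phs) - liftC Y * ((Gp Y).map phs) := by
    rw [sub_mul, Matrix.smul_mul tF (1 : Matrix (Fin (m+2)) (Fin (m+2)) FF) ((Gp Y).map phs),
      Matrix.one_mul]
  rw [hNG]
  refine Matrix.ext fun i j => ?_
  rw [kappaMat, Matrix.mul_diagonal]
  by_cases hj : j = Fin.last (m+1)
  · subst hj
    have hval : ((Fin.last (m+1) : Fin (m+2)) : ℕ) = (m+2) - 1 := rfl
    rw [if_pos hval]
    have hcol : (tF • ((Gp Y).map phs) - liftC Y * ((Gp Y).map phs)) i (Fin.last (m+1))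
        = phs (X * pv Y i - ∑ l, C (Y i l) * pv Y l) := by
      rw [map_sub, map_mul, map_sum]
      rw [Matrix.sub_apply, Matrix.smul_apply, Matrix.mul_apply]
      congr 1
      · rw [Matrix.map_apply, Gp, Matrix.of_apply, if_pos rfl, smul_eq_mul, tF_eq]
      · refine Finset.sum_congr rfl fun l _ => ?_
        rw [Matrix.map_apply, Gp, Matrix.of_apply, if_pos rfl, liftC, Matrix.map_apply, algC,
          map_mul]
    rw [hcol, key_p Y hupper i]
    rw [Matrix.smul_apply, Matrix.map_apply, Hp, Matrix.of_apply, if_pos rfl]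
    rw [map_mul, map_pow, ← tF_eq, smul_eq_mul]
    have hone : (phs (C ((1 : Matrix (Fin (m+2)) (Fin (m+2)) ℂ) i (Fin.last (m+1)))))
        = phs (if i = Fin.last (m+1) then 1 else 0) := by
      by_cases hi : i = Fin.last (m+1)
      · rw [hi, Matrix.one_apply_eq, if_pos rfl, map_one]
      · rw [Matrix.one_apply_ne hi, if_neg hi, map_zero]
    rw [hone]
    have hpow : tF ^ (m+2) * tF ^ (-((↑(m+2):ℤ) - 1)) = tF := by
      have h1 : tF ^ (m+2) = tF ^ ((m+2 : ℕ) : ℤ) := (zpow_natCast tF (m+2)).symm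
      rw [h1, ← zpow_add₀ tF_ne]
      norm_num
    linear_combination phs (if i = Fin.last (m+1) then (1:PowerSeries ℂ) else 0) * hpow
  · -- case j ≠ last
    have hjv : ((j:ℕ) = (m+2) - 1) → False := by
      intro hv; exact hj (Fin.ext (by rw [Fin.val_last]; omega))
    rw [if_neg hjv]
    have hG : ∀ l : Fin (m+2), ((Gp Y).map phs) l j
        = phs (if (l:ℕ) = (j:ℕ)+1 then (if j = 0 then lamP Y else 1) else 0) := by
      intro l
      rw [Matrix.map_apply, Gp, Matrix.of_apply, if_neg hj]
    have hsum : (liftC Y * ((Gp Y).map phs)) i j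
        = phs (C (Y i (jsucc j))) * phs (if j = 0 then lamP Y else 1) := by
      rw [Matrix.mul_apply, Finset.sum_eq_single (jsucc j)]
      · rw [hG, if_pos (jsucc_val j hj), liftC, Matrix.map_apply, algC]
      · intro l _ hl
        rw [hG, if_neg, map_zero, mul_zero]
        intro hv
        exact hl (Fin.ext (by rw [hv, jsucc_val j hj]))
      · intro hmem; exact absurd (Finset.mem_univ _) hmem
    rw [Matrix.sub_apply, Matrix.smul_apply, hsum, hG i, Matrix.smul_apply,
      Matrix.map_apply, Hp, Matrix.of_apply, if_neg hj, smul_eq_mul, smul_eq_mul,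
      map_mul, map_sub, map_mul]
    have hite : phs (if (i:ℕ) = (j:ℕ)+1 then (1:PowerSeries ℂ) else 0)
        = (if (i:ℕ) = (j:ℕ)+1 then (1:FF) else 0) := by
      by_cases hv : (i:ℕ) = (j:ℕ)+1
      · rw [if_pos hv, if_pos hv, map_one]
      · rw [if_neg hv, if_neg hv, map_zero]
    rw [hite, ← tF_eq]
    by_cases hv : (i:ℕ) = (j:ℕ)+1
    · rw [if_pos hv, if_pos hv]
      ring
    · rw [if_neg hv, if_neg hv, map_zero]
      ring

/-- determinant of `t•1 − Y` is `tⁿ`. -/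
lemma det_N (hupper : ∀ i j : Fin (m+2), (j : ℕ) ≤ (i : ℕ) → Y i j = 0) :
    (tF • 1 - liftC Y).det = tF ^ (m+2) := by
  have tri : Matrix.BlockTriangular (tF • (1:Matrix (Fin (m+2)) (Fin (m+2)) FF) - liftC Y) id := by
    intro i j hlt
    have h1 : (1 : Matrix (Fin (m+2)) (Fin (m+2)) FF) i j = 0 :=
      Matrix.one_apply_ne (by intro e; subst e; exact absurd hlt (lt_irrefl _))
    have h2 : Y i j = 0 := hupper i j (le_of_lt hlt)
    rw [Matrix.sub_apply, Matrix.smul_apply, h1, liftC, Matrix.map_apply, h2,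
      map_zero, sub_zero, smul_eq_mul, mul_zero]
  rw [Matrix.det_of_upperTriangular tri]
  have hdiag : ∀ i : Fin (m+2), (tF • (1:Matrix (Fin (m+2)) (Fin (m+2)) FF) - liftC Y) i i = tF := by
    intro i
    rw [Matrix.sub_apply, Matrix.smul_apply, Matrix.one_apply_eq, liftC, Matrix.map_apply,
      hupper i i le_rfl, map_zero, sub_zero, smul_eq_mul, mul_one]
  rw [Finset.prod_congr rfl fun i _ => hdiag i, Finset.prod_const, Finset.card_univ,
    Fintype.card_fin]

lemma det_kappa : (kappaMat (m+2)).det = 1 := by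
  rw [kappaMat, Matrix.det_diagonal]
  rw [← Finset.mul_prod_erase Finset.univ _ (Finset.mem_univ (Fin.last (m+1)))]
  have h1 : ((Fin.last (m+1) : Fin (m+2)) : ℕ) = (m+2) - 1 := rfl
  rw [if_pos h1]
  have h2 : ∀ i ∈ Finset.univ.erase (Fin.last (m+1)),
      (if ((i : Fin (m+2)):ℕ) = (m+2) - 1 then tF ^ (-((↑(m+2):ℤ) - 1)) else tF) = tF := by
    intro i hi
    rw [if_neg]
    intro hv
    exact (Finset.mem_erase.mp hi).1 (Fin.ext (by omega))
  rw [Finset.prod_congr rfl h2, Finset.prod_const, Finset.card_erase_of_mem (Finset.mem_univ _),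
    Finset.card_univ, Fintype.card_fin]
  rw [← zpow_natCast tF ((m+2) - 1), ← zpow_add₀ tF_ne]
  have he : -((((m+2:ℕ)):ℤ) - 1) + (((m + 2 - 1 : ℕ)):ℤ) = 0 := by omega
  rw [he, zpow_zero]

lemma det_Gp (hc : constantCoeff (pv Y 0) ≠ 0) : (Gp Y).det = 1 := by
  rw [Matrix.det_apply']
  rw [Finset.sum_eq_single_of_mem (finRotate (m+2)) (Finset.mem_univ _)]
  · have hlast0 : finRotate (m+2) (Fin.last (m+1)) = 0 := finRotate_last
    rw [← Finset.mul_prod_erase Finset.univ _ (Finset.mem_univ (Fin.last (m+1)))]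
    have e1 : Gp Y (finRotate (m+2) (Fin.last (m+1))) (Fin.last (m+1)) = pv Y 0 := by
      rw [hlast0, Gp, Matrix.of_apply, if_pos rfl]
    have hval : ∀ i : Fin (m+2), i ≠ Fin.last (m+1) →
        ((finRotate (m+2) i : Fin (m+2)) : ℕ) = (i:ℕ) + 1 := by
      intro i hi
      rw [finRotate_succ_apply, Fin.val_add_one_of_lt]
      exact lt_of_le_of_ne (Fin.le_last i) hi
    have e2 : ∏ i ∈ Finset.univ.erase (Fin.last (m+1)),
        Gp Y (finRotate (m+2) i) i = lamP Y := by
      rw [Finset.prod_eq_single_of_mem (0 : Fin (m+2))]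
      · rw [Gp, Matrix.of_apply, if_neg, if_pos, if_pos rfl]
        · exact hval 0 (by intro e; exact absurd (congrArg Fin.val e) (by simp))
        · intro e; exact absurd (congrArg Fin.val e) (by simp)
      · exact Finset.mem_erase.mpr ⟨by intro e; exact absurd (congrArg Fin.val e) (by simp),
          Finset.mem_univ _⟩
      · intro i hi hne
        have hil : i ≠ Fin.last (m+1) := (Finset.mem_erase.mp hi).1
        rw [Gp, Matrix.of_apply, if_neg hil, if_pos (hval i hil), if_neg hne]
    rw [e1, e2, sign_finRotate]
    simp only [Units.val_pow_eq_pow_val, Units.val_neg, Units.val_one, Int.cast_pow,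
      Int.cast_neg, Int.cast_one]
    rw [lamP]
    have : ((-1 : PowerSeries ℂ))^(m+1) * (pv Y 0 * ((-1)^(m+1) * (pv Y 0)⁻¹))
        = ((-1 : PowerSeries ℂ) * -1)^(m+1) * (pv Y 0 * (pv Y 0)⁻¹) := by
      rw [mul_pow]; ring
    rw [show m + 2 - 1 = m + 1 from rfl, this, PowerSeries.mul_inv_cancel _ hc]
    norm_num
  · intro σ _ hσ
    have hex : ∃ j : Fin (m+2), j ≠ Fin.last (m+1) ∧ σ j ≠ finRotate (m+2) j := by
      by_contra hcon
      push_neg at hcon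
      apply hσ
      apply Equiv.ext
      intro j
      by_cases hjl : j = Fin.last (m+1)
      · subst hjl
        obtain ⟨x, hx⟩ := σ.surjective (finRotate (m+2) (Fin.last (m+1)))
        by_cases hxl : x = Fin.last (m+1)
        · rw [← hxl, hx, hxl]
        · exact absurd ((finRotate (m+2)).injective ((hcon x hxl) ▸ hx))  hxl
      · exact hcon j hjl
    obtain ⟨j, hjl, hne⟩ := hex
    have hz : Gp Y (σ j) j = 0 := by
      rw [Gp, Matrix.of_apply, if_neg hjl, if_neg]
      intro hv
      apply hne
      apply Fin.ext
      rw [hv, finRotate_succ_apply, Fin.val_add_one_of_lt]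
      exact lt_of_le_of_ne (Fin.le_last j) hjl
    rw [Finset.prod_eq_zero (f := fun i => Gp Y (σ i) i) (Finset.mem_univ j) hz, mul_zero]

lemma det_G_map (hc : constantCoeff (pv Y 0) ≠ 0) : ((Gp Y).map phs).det = 1 := by
  rw [← RingHom.mapMatrix_apply, ← RingHom.map_det, det_Gp Y hc, map_one]

end S0

set_option maxHeartbeats 1600000 in
/-- If `Y` is strictly upper triangular with all superdiagonal entries
nonzero, then there are `g ∈ G₀` and `h ∈ 𝓑` with `g·κ = Ȳ·h`. -/
theorem stmt0 {n : ℕ} (hn : 2 ≤ n) (Y : Matrix (Fin n) (Fin n) ℂ)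
    (hupper : ∀ i j : Fin n, (j : ℕ) ≤ (i : ℕ) → Y i j = 0)
    (hsuper : ∀ i j : Fin n, (j : ℕ) = (i : ℕ) + 1 → Y i j ≠ 0) :
    ∃ g h : Matrix (Fin n) (Fin n) FF,
      MemG0 g ∧ MemIwahori h ∧ g * kappaMat n = Ybar Y * h := by
  obtain ⟨m, rfl⟩ : ∃ m, n = m + 2 := ⟨n - 2, by omega⟩
  clear hn
  set G := (S0.Gp Y).map S0.phs with hGdef
  set H := (S0.Hp Y).map S0.phs with hHdef
  have hc : PowerSeries.constantCoeff (S0.pv Y 0) ≠ 0 := by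
    rw [S0.constantCoeff_pv]
    exact S0.pow_entry_ne_zero Y hupper hsuper (m+1) 0 (Fin.last (m+1))
      (by rw [Fin.val_last]; simp)
  have hkey := S0.key_identity Y hupper
  have hYbarN := S0.Ybar_mul_N Y hupper
  have hdetG : G.det = 1 := S0.det_G_map Y hc
  have hmain : G * kappaMat (m+2) = Ybar Y * H := by
    have h2 : Ybar Y * ((tF • 1 - liftC Y) * G * kappaMat (m+2))
        = tF • (G * kappaMat (m+2)) := by
      calc Ybar Y * ((tF • 1 - liftC Y) * G * kappaMat (m+2))
          = (Ybar Y * (tF • 1 - liftC Y)) * (G * kappaMat (m+2)) := by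
            rw [Matrix.mul_assoc, Matrix.mul_assoc]
        _ = (tF • 1) * (G * kappaMat (m+2)) := by rw [hYbarN]
        _ = tF • (G * kappaMat (m+2)) := by
            rw [Matrix.smul_mul tF 1 (G * kappaMat (m+2)), Matrix.one_mul]
    have h3 : Ybar Y * (tF • H) = tF • (Ybar Y * H) := Matrix.mul_smul (Ybar Y) tF H
    have h4 : tF • (G * kappaMat (m+2)) = tF • (Ybar Y * H) := by
      rw [← h2, hkey, h3]
    refine Matrix.ext fun i j => ?_
    have h5 : (tF • (G * kappaMat (m+2))) i j = (tF • (Ybar Y * H)) i j := by rw [h4]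
    rw [Matrix.smul_apply, Matrix.smul_apply, smul_eq_mul, smul_eq_mul] at h5
    exact mul_left_cancel₀ S0.tF_ne h5
  have hdetH : H.det = 1 := by
    have hd := congrArg Matrix.det hkey
    rw [Matrix.det_mul, Matrix.det_mul, S0.det_N Y hupper, hdetG, S0.det_kappa,
      Matrix.det_smul, Fintype.card_fin] at hd
    rw [mul_one, mul_one] at hd
    have h2 : tF ^ (m+2) * (1:FF) = tF ^ (m+2) * H.det := by rw [mul_one]; exact hd
    exact (mul_left_cancel₀ (pow_ne_zero (m+2) S0.tF_ne) h2).symm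
  refine ⟨G, H, ⟨hdetG, ?_⟩, ⟨hdetH, ?_, ?_⟩, hmain⟩
  · intro i j
    rw [hGdef, Matrix.map_apply]
    exact S0.int_phs _
  · intro i j
    rw [hHdef, Matrix.map_apply]
    exact S0.int_phs _
  · intro i j hij
    rw [hHdef, Matrix.map_apply, S0.coeff0_phs]
    have hjl : j ≠ Fin.last (m+1) := by
      intro e
      have hi := i.isLt
      rw [e, Fin.val_last] at hij
      omega
    rw [S0.Hp, Matrix.of_apply, if_neg hjl]
    have hY0 : Y i (S0.jsucc j) = 0 := by
      refine hupper i _ ?_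
      rw [S0.jsucc_val j hjl]
      omega
    simp only [hY0, map_mul, map_sub, map_zero, mul_ite, mul_one, mul_zero]
    split_ifs <;> simp [map_mul, PowerSeries.constantCoeff_X]


end
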